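/- For each d ≥ 2 there exists a constant c'_d ∈ (0,∞) such that Q_d(r) ≤ c'_d (1 ∨ r) exp(−(d−1)r/2) for all r ≥ 0, where Q_d(r) := Q^𝔹_d(tanh(r/2);0). -/

import Mathlib

open MeasureTheory intervalIntegral

/-- `𝔖_k`: the `k`-dimensional Lebesgue surface volume of the unit `k`-sphere in `ℝ^{k+1}`,
`𝔖_k = 2 π^{(k+1)/2} / Γ((k+1)/2)`. -/
noncomputable def sphereSurf (k : ℕ) : ℝ :=
  2 * Real.pi ^ (((k:ℝ) + 1) / 2) / Real.Gamma (((k:ℝ) + 1) / 2)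

/-- `Q^𝔹_d(ρ;0) = (𝔖_{d-2}/𝔖_{d-1}) ∫₀^π ((1−ρ²)/(1+ρ²−2ρcosθ))^{(d-1)/2} (sinθ)^{d-2} dθ`. -/
noncomputable def Qball (d : ℕ) (ρ : ℝ) : ℝ :=
  (sphereSurf (d - 2) / sphereSurf (d - 1)) *
    ∫ θ in (0:ℝ)..Real.pi,
      ((1 - ρ ^ 2) / (1 + ρ ^ 2 - 2 * ρ * Real.cos θ)) ^ (((d:ℝ) - 1) / 2)
        * (Real.sin θ) ^ (d - 2)

/-- `Q_d(r) := Q^𝔹_d(tanh(r/2); 0)`. -/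
noncomputable def Qhyp (d : ℕ) (r : ℝ) : ℝ := Qball d (Real.tanh (r / 2))

lemma sphereSurf_pos (k : ℕ) : 0 < sphereSurf k := by
  have h : (0:ℝ) < ((k:ℝ)+1)/2 := by positivity
  have hg := Real.Gamma_pos_of_pos h
  have hpi : (0:ℝ) < Real.pi ^ (((k:ℝ)+1)/2) := Real.rpow_pos_of_pos Real.pi_pos _
  unfold sphereSurf
  positivity

lemma one_sub_tanh_eq (x : ℝ) : 1 - Real.tanh x = Real.exp (-x) / Real.cosh x := by
  rw [Real.tanh_eq_sinh_div_cosh, ← Real.cosh_sub_sinh]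
  field_simp [(Real.cosh_pos x).ne']

lemma one_sub_tanh_le (x : ℝ) : 1 - Real.tanh x ≤ 2 * Real.exp (-2*x) := by
  rw [one_sub_tanh_eq]
  have h1 : Real.exp x / 2 ≤ Real.cosh x := by
    rw [Real.cosh_eq]; have := (Real.exp_pos (-x)).le; linarith
  have h2 : (0:ℝ) < Real.exp x / 2 := by positivity
  calc Real.exp (-x) / Real.cosh x ≤ Real.exp (-x) / (Real.exp x / 2) :=
        div_le_div_of_nonneg_left (Real.exp_pos (-x)).le h2 h1
    _ = 2 * Real.exp (-2*x) := by
        rw [div_div_eq_mul_div, div_eq_iff (Real.exp_pos x).ne', mul_assoc, ← Real.exp_add,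
          show -2*x + x = -x from by ring]
        ring
  -- done

lemma le_one_sub_tanh (x : ℝ) (hx : 0 ≤ x) : Real.exp (-2*x) ≤ 1 - Real.tanh x := by
  rw [one_sub_tanh_eq]
  have h1 : Real.cosh x ≤ Real.exp x := by
    rw [Real.cosh_eq]
    have : Real.exp (-x) ≤ Real.exp x := Real.exp_le_exp.2 (by linarith)
    linarith
  have h2 : 0 < Real.cosh x := Real.cosh_pos x
  calc Real.exp (-2*x) = Real.exp (-x) / Real.exp x := by
        rw [← Real.exp_sub]; ring_nf
    _ ≤ Real.exp (-x) / Real.cosh x :=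
        div_le_div_of_nonneg_left (Real.exp_pos (-x)).le h2 h1

lemma tanh_lt_one' (x : ℝ) : Real.tanh x < 1 := by
  rw [Real.tanh_eq_sinh_div_cosh, div_lt_one (Real.cosh_pos x)]
  exact Real.sinh_lt_cosh x

lemma tanh_nonneg' (x : ℝ) (hx : 0 ≤ x) : 0 ≤ Real.tanh x := by
  rw [Real.tanh_eq_sinh_div_cosh]
  exact div_nonneg (by rwa [Real.sinh_nonneg_iff]) (Real.cosh_pos x).le

lemma cont_f (d : ℕ) (hd : 2 ≤ d) (ρ : ℝ) (h0 : 0 ≤ ρ) (h1 : ρ < 1) :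
    Continuous (fun θ : ℝ =>
      ((1 - ρ ^ 2) / (1 + ρ ^ 2 - 2 * ρ * Real.cos θ)) ^ (((d:ℝ) - 1) / 2)
        * (Real.sin θ) ^ (d - 2)) := by
  have hD : ∀ θ : ℝ, 0 < 1 + ρ ^ 2 - 2 * ρ * Real.cos θ := by
    intro θ
    have h2 : 2 * ρ * Real.cos θ ≤ 2 * ρ := by
      have := Real.cos_le_one θ
      nlinarith
    nlinarith [sq_nonneg (1 - ρ)]
  have hbase : Continuous (fun θ : ℝ => (1 - ρ ^ 2) / (1 + ρ ^ 2 - 2 * ρ * Real.cos θ)) :=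
    continuous_const.div (by continuity) (fun θ => (hD θ).ne')
  have hp : (0:ℝ) ≤ ((d:ℝ) - 1) / 2 := by
    have : (2:ℝ) ≤ d := by exact_mod_cast hd
    linarith
  exact (hbase.rpow_const (fun θ => Or.inr hp)).mul (by continuity)

lemma integral_inv_linear (ε : ℝ) (hε : 0 < ε) :
    ∫ θ in (0:ℝ)..(Real.pi/2), (ε + θ / Real.pi)⁻¹
      = Real.pi * (Real.log (ε + 1/2) - Real.log ε) := by
  have hpi := Real.pi_pos
  have key : ∀ x ∈ Set.uIcc (0:ℝ) (Real.pi/2),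
      HasDerivAt (fun θ => Real.pi * Real.log (ε + θ / Real.pi)) ((ε + x / Real.pi)⁻¹) x := by
    intro x hx
    rw [Set.uIcc_of_le (by positivity)] at hx
    have hxpos : 0 < ε + x / Real.pi := by
      have : 0 ≤ x / Real.pi := div_nonneg hx.1 hpi.le
      linarith
    have h1 : HasDerivAt (fun θ : ℝ => ε + θ / Real.pi) (1 / Real.pi) x := by
      simpa using ((hasDerivAt_id x).div_const Real.pi).const_add ε
    have h2 := (Real.hasDerivAt_log hxpos.ne').comp x h1
    have h3 := h2.const_mul Real.pi
    rw [show Real.pi * ((ε + x / Real.pi)⁻¹ * (1 / Real.pi))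
        = (ε + x / Real.pi)⁻¹ * (Real.pi * (1 / Real.pi)) from by ring,
      mul_one_div, div_self Real.pi_ne_zero, mul_one] at h3
    exact h3
  have hint : IntervalIntegrable (fun θ : ℝ => (ε + θ / Real.pi)⁻¹) volume 0 (Real.pi/2) := by
    apply ContinuousOn.intervalIntegrable
    apply ContinuousOn.inv₀
    · fun_prop
    · intro x hx
      rw [Set.uIcc_of_le (by positivity)] at hx
      have : 0 ≤ x / Real.pi := div_nonneg hx.1 hpi.le
      intro h; linarith
  rw [intervalIntegral.integral_eq_sub_of_hasDerivAt key hint,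
    show Real.pi / 2 / Real.pi = 1/2 from by field_simp]
  simp
  ring

set_option maxHeartbeats 1000000 in
lemma pointwise_bound (d : ℕ) (hd : 2 ≤ d) (ρ θ : ℝ) (hρ : 1/4 ≤ ρ) (hρ1 : ρ < 1)
    (hθ0 : 0 ≤ θ) (hθπ : θ ≤ Real.pi) :
    ((1 - ρ ^ 2) / (1 + ρ ^ 2 - 2 * ρ * Real.cos θ)) ^ (((d:ℝ) - 1) / 2)
        * (Real.sin θ) ^ (d - 2)
      ≤ Real.sqrt 2 * 2 ^ (d - 2) * (2 * (1 - ρ)) ^ (((d:ℝ) - 1) / 2)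
        * ((1 - ρ) + Real.sin θ / 2)⁻¹ := by
  set m : ℕ := d - 2 with hm
  set p : ℝ := ((d:ℝ) - 1) / 2 with hp
  set ε : ℝ := 1 - ρ with hε
  set s : ℝ := Real.sin θ with hs
  clear_value m p ε s
  have hεpos : 0 < ε := by rw [hε]; linarith
  have hs0 : 0 ≤ s := by rw [hs]; exact Real.sin_nonneg_of_nonneg_of_le_pi hθ0 hθπ
  have hcos : Real.cos θ ≤ 1 := Real.cos_le_one θ
  have hcos' : -1 ≤ Real.cos θ := Real.neg_one_le_cos θ
  have hsq : s ^ 2 + Real.cos θ ^ 2 = 1 := by rw [hs]; exact Real.sin_sq_add_cos_sq θ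
  have hdcast : (d:ℝ) = (m:ℝ) + 2 := by
    have : (m:ℝ) = (d:ℝ) - 2 := by
      rw [hm]; push_cast [Nat.cast_sub hd]; ring
    linarith
  have hpm : p = (m:ℝ)/2 + 1/2 := by rw [hp, hdcast]; ring
  have hp0 : 0 ≤ p := by rw [hpm]; positivity
  set E : ℝ := ε ^ 2 + (1/4) * s ^ 2 with hE
  clear_value E
  have hEpos : 0 < E := by rw [hE]; positivity
  set D : ℝ := 1 + ρ ^ 2 - 2 * ρ * Real.cos θ with hD
  clear_value D
  have hED : E ≤ D := by
    rw [hE, hD, hε]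
    nlinarith [mul_nonneg (mul_nonneg (by linarith : (0:ℝ) ≤ ρ - 1/4) (by linarith : (0:ℝ) ≤ 1 - Real.cos θ)) (by linarith : (0:ℝ) ≤ 1 - Real.cos θ),
      mul_nonneg (by linarith : (0:ℝ) ≤ 1/4) (sq_nonneg (1 - Real.cos θ))]
  have hnum : 1 - ρ ^ 2 ≤ 2 * ε := by rw [hε]; nlinarith
  have hnum0 : 0 ≤ 1 - ρ ^ 2 := by nlinarith
  have hratio : (1 - ρ ^ 2) / D ≤ 2 * ε / E :=
    div_le_div₀ (by positivity) hnum hEpos hED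
  have hratio0 : 0 ≤ (1 - ρ ^ 2) / D := div_nonneg hnum0 (hEpos.trans_le hED).le
  have step1 : ((1 - ρ ^ 2) / D) ^ p ≤ (2 * ε) ^ p / E ^ p := by
    rw [← Real.div_rpow (by positivity) hEpos.le]
    exact Real.rpow_le_rpow hratio0 hratio hp0
  have hEsplit : E ^ p = E ^ ((m:ℝ)/2) * E ^ ((1:ℝ)/2) := by
    rw [← Real.rpow_add hEpos, hpm]
  have hxm : ∀ x : ℝ, 0 ≤ x → (x ^ 2) ^ ((m:ℝ)/2) = x ^ m := by
    intro x hx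
    rw [← Real.rpow_natCast x 2, ← Real.rpow_mul hx,
      show ((2:ℕ):ℝ) * ((m:ℝ)/2) = ((m:ℕ):ℝ) by push_cast; ring, Real.rpow_natCast]
  have h1 : (s/2) ^ m ≤ E ^ ((m:ℝ)/2) := by
    have hle : (s/2) ^ 2 ≤ E := by rw [hE]; nlinarith
    calc (s/2) ^ m = ((s/2) ^ 2) ^ ((m:ℝ)/2) := (hxm _ (by positivity)).symm
      _ ≤ E ^ ((m:ℝ)/2) := Real.rpow_le_rpow (by positivity) hle (by positivity)
  have h2 : (ε + s/2) / Real.sqrt 2 ≤ E ^ ((1:ℝ)/2) := by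
    rw [← Real.sqrt_eq_rpow, div_le_iff₀ (by positivity)]
    have h2E : (ε + s/2)^2 ≤ 2 * E := by rw [hE]; nlinarith [sq_nonneg (ε - s/2)]
    calc ε + s/2 = Real.sqrt ((ε + s/2)^2) := (Real.sqrt_sq (by positivity)).symm
      _ ≤ Real.sqrt (2 * E) := Real.sqrt_le_sqrt h2E
      _ = Real.sqrt E * Real.sqrt 2 := by
          rw [Real.sqrt_mul (by norm_num), mul_comm]
  have hElb : (s/2) ^ m * ((ε + s/2) / Real.sqrt 2) ≤ E ^ p := by
    rw [hEsplit]
    exact mul_le_mul h1 h2 (by positivity) (by positivity)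
  have hkey : s ^ m * (ε + s/2) ≤ Real.sqrt 2 * 2 ^ m * E ^ p := by
    have hsqrt2 : (0:ℝ) < Real.sqrt 2 := by positivity
    have hthis := mul_le_mul_of_nonneg_left hElb
      (by positivity : (0:ℝ) ≤ Real.sqrt 2 * 2 ^ m)
    calc s ^ m * (ε + s/2)
        = Real.sqrt 2 * 2 ^ m * ((s/2) ^ m * ((ε + s/2) / Real.sqrt 2)) := by
          rw [div_pow]
          field_simp
      _ ≤ Real.sqrt 2 * 2 ^ m * E ^ p := hthis
  have hEppos : 0 < E ^ p := Real.rpow_pos_of_pos hEpos _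
  have hden : 0 < ε + s/2 := by positivity
  have step2 : s ^ m / E ^ p ≤ (Real.sqrt 2 * 2 ^ m) / (ε + s/2) := by
    rw [div_le_div_iff₀ hEppos hden]
    exact hkey
  calc ((1 - ρ ^ 2) / D) ^ p * s ^ m ≤ ((2 * ε) ^ p / E ^ p) * s ^ m :=
        mul_le_mul_of_nonneg_right step1 (by positivity)
    _ = (2 * ε) ^ p * (s ^ m / E ^ p) := by ring
    _ ≤ (2 * ε) ^ p * ((Real.sqrt 2 * 2 ^ m) / (ε + s/2)) :=
        mul_le_mul_of_nonneg_left step2 (by positivity)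
    _ = Real.sqrt 2 * 2 ^ m * (2 * ε) ^ p * (ε + s/2)⁻¹ := by
        rw [div_eq_mul_inv]; ring

lemma pointwise_crude (d : ℕ) (hd : 2 ≤ d) (ρ θ : ℝ) (h0 : 0 ≤ ρ) (h1 : ρ ≤ 2/3)
    (hθ0 : 0 ≤ θ) (hθπ : θ ≤ Real.pi) :
    ((1 - ρ ^ 2) / (1 + ρ ^ 2 - 2 * ρ * Real.cos θ)) ^ (((d:ℝ) - 1) / 2)
        * (Real.sin θ) ^ (d - 2)
      ≤ (6:ℝ) ^ (((d:ℝ) - 1) / 2) := by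
  have hp0 : (0:ℝ) ≤ ((d:ℝ) - 1) / 2 := by
    have : (2:ℝ) ≤ d := by exact_mod_cast hd
    linarith
  have hcos : Real.cos θ ≤ 1 := Real.cos_le_one θ
  have hD : 0 < 1 + ρ ^ 2 - 2 * ρ * Real.cos θ := by nlinarith
  have hratio0 : 0 ≤ (1 - ρ ^ 2) / (1 + ρ ^ 2 - 2 * ρ * Real.cos θ) := by
    apply div_nonneg _ hD.le
    nlinarith
  have hratio : (1 - ρ ^ 2) / (1 + ρ ^ 2 - 2 * ρ * Real.cos θ) ≤ 6 := by
    rw [div_le_iff₀ hD]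
    nlinarith
  have hs0 : 0 ≤ Real.sin θ := Real.sin_nonneg_of_nonneg_of_le_pi hθ0 hθπ
  have hs1 : Real.sin θ ≤ 1 := Real.sin_le_one θ
  calc ((1 - ρ ^ 2) / (1 + ρ ^ 2 - 2 * ρ * Real.cos θ)) ^ (((d:ℝ) - 1) / 2)
        * (Real.sin θ) ^ (d - 2)
      ≤ ((1 - ρ ^ 2) / (1 + ρ ^ 2 - 2 * ρ * Real.cos θ)) ^ (((d:ℝ) - 1) / 2) * 1 := by
        apply mul_le_mul_of_nonneg_left _ (Real.rpow_nonneg hratio0 _)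
        exact pow_le_one₀ hs0 hs1
    _ = ((1 - ρ ^ 2) / (1 + ρ ^ 2 - 2 * ρ * Real.cos θ)) ^ (((d:ℝ) - 1) / 2) := mul_one _
    _ ≤ (6:ℝ) ^ (((d:ℝ) - 1) / 2) := Real.rpow_le_rpow hratio0 hratio hp0
set_option maxHeartbeats 1000000 in
/-- For each `d ≥ 2` there is `c'_d ∈ (0,∞)` with
`Q_d(r) ≤ c'_d (1 ∨ r) exp(−(d−1)r/2)` for all `r ≥ 0`. -/
theorem Qhyp_upper_bound (d : ℕ) (hd : 2 ≤ d) :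
    ∃ c : ℝ, 0 < c ∧ ∀ r ≥ (0:ℝ),
      Qhyp d r ≤ c * max 1 r * Real.exp (-(((d:ℝ) - 1) / 2) * r) := by
  have hpi := Real.pi_pos
  set p : ℝ := ((d:ℝ) - 1) / 2 with hp
  have hd2 : (2:ℝ) ≤ (d:ℝ) := by exact_mod_cast hd
  have hp0 : 0 < p := by rw [hp]; linarith
  set S : ℝ := sphereSurf (d - 2) / sphereSurf (d - 1) with hS
  have hSpos : 0 < S := div_pos (sphereSurf_pos _) (sphereSurf_pos _)
  clear_value S
  set A : ℝ := Real.sqrt 2 * 2 ^ (d - 2) * (4:ℝ) ^ p with hA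
  have hApos : 0 < A := by
    rw [hA]
    have h1 := Real.rpow_pos_of_pos (by norm_num : (0:ℝ) < 4) p
    have h2 : (0:ℝ) < Real.sqrt 2 := by positivity
    positivity
  clear_value A
  set c₁ : ℝ := S * Real.pi * (6:ℝ) ^ p * Real.exp p with hc₁
  set c₂ : ℝ := S * (A * (4 * Real.pi)) with hc₂
  have hc₁pos : 0 < c₁ := by
    rw [hc₁]
    have := Real.rpow_pos_of_pos (by norm_num : (0:ℝ) < 6) p
    positivity
  have hc₂pos : 0 < c₂ := by rw [hc₂]; positivity
  clear_value c₁ c₂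
  refine ⟨c₁ + c₂, by linarith, fun r hr => ?_⟩
  -- basic facts about ρ = tanh (r/2)
  set ρ : ℝ := Real.tanh (r / 2) with hρdef
  have hρ0 : 0 ≤ ρ := tanh_nonneg' _ (by linarith)
  have hρ1 : ρ < 1 := tanh_lt_one' _
  have hQ : Qhyp d r = S * ∫ θ in (0:ℝ)..Real.pi,
      ((1 - ρ ^ 2) / (1 + ρ ^ 2 - 2 * ρ * Real.cos θ)) ^ p * (Real.sin θ) ^ (d - 2) := by
    rw [Qhyp, Qball, hS, hp]
  have hεlow' : Real.exp (-r) ≤ 1 - ρ := by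
    have h := le_one_sub_tanh (r/2) (by linarith)
    rw [show -2 * (r/2) = -r from by ring] at h
    exact h
  have hεhigh' : 1 - ρ ≤ 2 * Real.exp (-r) := by
    have h := one_sub_tanh_le (r/2)
    rw [show -2 * (r/2) = -r from by ring] at h
    exact h
  clear_value ρ
  set ε : ℝ := 1 - ρ with hεdef
  clear_value ε
  have hεpos : 0 < ε := by rw [hεdef]; linarith
  have hεlow : Real.exp (-r) ≤ ε := hεlow'
  have hεhigh : ε ≤ 2 * Real.exp (-r) := hεhigh'
  have hε1 : ε ≤ 1 := by rw [hεdef]; linarith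
  have hintf : IntervalIntegrable (fun θ : ℝ =>
      ((1 - ρ ^ 2) / (1 + ρ ^ 2 - 2 * ρ * Real.cos θ)) ^ p * (Real.sin θ) ^ (d - 2))
      volume 0 Real.pi := by
    rw [hp]
    exact (cont_f d hd ρ hρ0 hρ1).intervalIntegrable 0 Real.pi
  have hexp_pos : (0:ℝ) < Real.exp (-p * r) := Real.exp_pos _
  have hexpr_pos := Real.exp_pos r
  rcases le_total r 1 with hr1 | hr1
  · -- case r ≤ 1 : crude bound
    have h3 : Real.exp r ≤ 3 :=
      (Real.exp_le_exp.2 hr1).trans (by linarith [Real.exp_one_lt_d9])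
    have hthird : (1:ℝ)/3 ≤ Real.exp (-r) := by
      rw [Real.exp_neg, one_div]
      exact inv_anti₀ hexpr_pos h3
    have hρ23 : ρ ≤ 2/3 := by
      have : (1:ℝ)/3 ≤ ε := hthird.trans hεlow
      rw [hεdef] at this; linarith
    have hI : (∫ θ in (0:ℝ)..Real.pi,
        ((1 - ρ ^ 2) / (1 + ρ ^ 2 - 2 * ρ * Real.cos θ)) ^ p * (Real.sin θ) ^ (d - 2))
        ≤ Real.pi * (6:ℝ) ^ p := by
      have hmono := intervalIntegral.integral_mono_on (μ := volume) (a := 0) (b := Real.pi)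
        (g := fun _ : ℝ => (6:ℝ) ^ p)
        hpi.le hintf intervalIntegrable_const
        (fun θ hθ => by
          rw [hp]
          exact pointwise_crude d hd ρ θ hρ0 hρ23 hθ.1 hθ.2)
      simpa [smul_eq_mul] using hmono
    have h6p : (0:ℝ) < (6:ℝ) ^ p := Real.rpow_pos_of_pos (by norm_num) p
    have hexp1 : Real.exp (-p) ≤ Real.exp (-p * r) := by
      apply Real.exp_le_exp.2
      nlinarith [mul_nonneg hp0.le (by linarith : (0:ℝ) ≤ 1 - r)]
    have hexppm : Real.exp p * Real.exp (-p) = 1 := by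
      rw [← Real.exp_add]; norm_num
    calc Qhyp d r ≤ S * (Real.pi * (6:ℝ) ^ p) := by
          rw [hQ]; exact mul_le_mul_of_nonneg_left hI hSpos.le
      _ = S * Real.pi * (6:ℝ) ^ p * (Real.exp p * Real.exp (-p)) := by rw [hexppm]; ring
      _ = c₁ * Real.exp (-p) := by rw [hc₁]; ring
      _ ≤ c₁ * Real.exp (-p * r) := mul_le_mul_of_nonneg_left hexp1 hc₁pos.le
      _ ≤ (c₁ + c₂) * max 1 r * Real.exp (-p * r) := by
          apply mul_le_mul_of_nonneg_right _ hexp_pos.le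
          have hmax : (1:ℝ) ≤ max 1 r := le_max_left _ _
          calc c₁ = c₁ * 1 := (mul_one _).symm
            _ ≤ (c₁ + c₂) * max 1 r :=
              mul_le_mul (by linarith) hmax zero_le_one (by linarith)
  · -- case 1 ≤ r
    have h83 : (8:ℝ)/3 ≤ Real.exp r := by
      have := Real.exp_one_gt_d9
      have := Real.exp_le_exp.2 hr1
      linarith
    have hexpr : Real.exp (-r) ≤ 3/8 := by
      rw [Real.exp_neg, show (3:ℝ)/8 = ((8:ℝ)/3)⁻¹ from by norm_num]
      exact inv_anti₀ (by norm_num) h83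
    have hρ14 : 1/4 ≤ ρ := by
      have : ε ≤ 3/4 := by linarith
      rw [hεdef] at this; linarith
    -- integrability of the majorant
    have hg_cont : ContinuousOn (fun θ : ℝ => (ε + Real.sin θ / 2)⁻¹) (Set.Icc 0 Real.pi) := by
      apply ContinuousOn.inv₀
      · fun_prop
      · intro x hx
        have h1 : 0 ≤ Real.sin x := Real.sin_nonneg_of_nonneg_of_le_pi hx.1 hx.2
        have h2 : 0 < ε + Real.sin x / 2 := by linarith
        exact h2.ne'
    have hintg : IntervalIntegrable (fun θ : ℝ => (ε + Real.sin θ / 2)⁻¹) volume 0 Real.pi := by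
      apply ContinuousOn.intervalIntegrable
      rwa [Set.uIcc_of_le hpi.le]
    have hintg1 : IntervalIntegrable (fun θ : ℝ => (ε + Real.sin θ / 2)⁻¹) volume 0 (Real.pi/2) :=
      hintg.mono_set (by
        rw [Set.uIcc_of_le hpi.le, Set.uIcc_of_le (by positivity)]
        exact Set.Icc_subset_Icc le_rfl (by linarith))
    have hintg2 : IntervalIntegrable (fun θ : ℝ => (ε + Real.sin θ / 2)⁻¹) volume
        (Real.pi/2) Real.pi :=
      hintg.mono_set (by
        rw [Set.uIcc_of_le hpi.le, Set.uIcc_of_le (by linarith)]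
        exact Set.Icc_subset_Icc (by positivity) le_rfl)
    set K : ℝ := Real.sqrt 2 * 2 ^ (d - 2) * (2 * ε) ^ p with hK
    have hKpos : 0 < K := by
      rw [hK]
      have h1 := Real.rpow_pos_of_pos (by linarith : (0:ℝ) < 2 * ε) p
      have h2 : (0:ℝ) < Real.sqrt 2 := by positivity
      positivity
    clear_value K
    -- step 1: I ≤ K * J
    have hI : (∫ θ in (0:ℝ)..Real.pi,
        ((1 - ρ ^ 2) / (1 + ρ ^ 2 - 2 * ρ * Real.cos θ)) ^ p * (Real.sin θ) ^ (d - 2))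
        ≤ K * ∫ θ in (0:ℝ)..Real.pi, (ε + Real.sin θ / 2)⁻¹ := by
      rw [← intervalIntegral.integral_const_mul]
      apply intervalIntegral.integral_mono_on hpi.le hintf (hintg.const_mul K)
      intro θ hθ
      have hpw := pointwise_bound d hd ρ θ hρ14 hρ1 hθ.1 hθ.2
      rw [← hεdef, ← hp, ← hK] at hpw
      exact hpw
    -- step 2: reflection and splitting
    have hrefl : (∫ θ in (Real.pi/2)..Real.pi, (ε + Real.sin θ / 2)⁻¹)
        = ∫ θ in (0:ℝ)..(Real.pi/2), (ε + Real.sin θ / 2)⁻¹ := by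
      have h := intervalIntegral.integral_comp_sub_left (a := 0) (b := Real.pi/2)
        (fun x => (ε + Real.sin x / 2)⁻¹) Real.pi
      simp only [Real.sin_pi_sub] at h
      rw [show Real.pi - Real.pi/2 = Real.pi/2 from by ring, sub_zero] at h
      exact h.symm
    have hsplit : (∫ θ in (0:ℝ)..Real.pi, (ε + Real.sin θ / 2)⁻¹)
        = 2 * ∫ θ in (0:ℝ)..(Real.pi/2), (ε + Real.sin θ / 2)⁻¹ := by
      rw [← intervalIntegral.integral_add_adjacent_intervals hintg1 hintg2, hrefl]
      ring
    -- step 3: J₁ ≤ ∫ (ε + θ/π)⁻¹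
    have hJ1 : (∫ θ in (0:ℝ)..(Real.pi/2), (ε + Real.sin θ / 2)⁻¹)
        ≤ ∫ θ in (0:ℝ)..(Real.pi/2), (ε + θ / Real.pi)⁻¹ := by
      have hintlin : IntervalIntegrable (fun θ : ℝ => (ε + θ / Real.pi)⁻¹)
          volume 0 (Real.pi/2) := by
        apply ContinuousOn.intervalIntegrable
        apply ContinuousOn.inv₀
        · fun_prop
        · intro x hx
          rw [Set.uIcc_of_le (by positivity)] at hx
          have h1 : 0 ≤ x / Real.pi := div_nonneg hx.1 hpi.le
          intro h; linarith
      apply intervalIntegral.integral_mono_on (by positivity) hintg1 hintlin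
      intro θ hθ
      have hsin := Real.mul_le_sin hθ.1 hθ.2
      have h1 : 0 < ε + θ / Real.pi := by
        have : 0 ≤ θ / Real.pi := div_nonneg hθ.1 hpi.le
        linarith
      apply inv_anti₀ h1
      have heq : θ / Real.pi = (2 / Real.pi * θ) / 2 := by ring
      rw [heq]
      linarith
    -- step 4: evaluate and bound the log integral
    have hlog : (∫ θ in (0:ℝ)..(Real.pi/2), (ε + θ / Real.pi)⁻¹) ≤ Real.pi * (3/2) * r := by
      rw [integral_inv_linear ε hεpos]
      have hlog1 : Real.log (ε + 1/2) ≤ 1/2 := by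
        have := Real.log_le_sub_one_of_pos (by linarith : (0:ℝ) < ε + 1/2)
        linarith
      have hlog2 : -r ≤ Real.log ε := by
        calc -r = Real.log (Real.exp (-r)) := (Real.log_exp _).symm
          _ ≤ Real.log ε := Real.log_le_log (Real.exp_pos _) hεlow
      have hd1 : Real.log (ε + 1/2) - Real.log ε ≤ 1/2 + r := by linarith
      calc Real.pi * (Real.log (ε + 1/2) - Real.log ε) ≤ Real.pi * (1/2 + r) :=
            mul_le_mul_of_nonneg_left hd1 hpi.le
        _ ≤ Real.pi * (3/2 * r) := by
            apply mul_le_mul_of_nonneg_left _ hpi.le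
            linarith
        _ = Real.pi * (3/2) * r := by ring
    -- step 5: K bound
    have hKbound : K ≤ A * Real.exp (-p * r) := by
      rw [hK, hA]
      have h2ε : (2 * ε) ^ p ≤ (4:ℝ) ^ p * Real.exp (-p * r) := by
        have h1 : (2 * ε) ≤ 4 * Real.exp (-r) := by linarith
        calc (2 * ε) ^ p ≤ (4 * Real.exp (-r)) ^ p :=
              Real.rpow_le_rpow (by linarith) h1 hp0.le
          _ = (4:ℝ) ^ p * (Real.exp (-r)) ^ p := Real.mul_rpow (by norm_num) (Real.exp_pos _).le
          _ = (4:ℝ) ^ p * Real.exp (-p * r) := by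
              rw [← Real.exp_mul, show -r * p = -p * r from by ring]
      calc Real.sqrt 2 * 2 ^ (d - 2) * (2 * ε) ^ p
          ≤ Real.sqrt 2 * 2 ^ (d - 2) * ((4:ℝ) ^ p * Real.exp (-p * r)) := by
            apply mul_le_mul_of_nonneg_left h2ε
            positivity
        _ = Real.sqrt 2 * 2 ^ (d - 2) * (4:ℝ) ^ p * Real.exp (-p * r) := by ring
    -- combine
    have hJ : (∫ θ in (0:ℝ)..Real.pi, (ε + Real.sin θ / 2)⁻¹) ≤ 3 * Real.pi * r := by
      rw [hsplit]
      have := hJ1.trans hlog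
      linarith
    have hmax : max 1 r = r := max_eq_right hr1
    have hrpos : (0:ℝ) < r := by linarith
    have hJnonneg : 0 ≤ ∫ θ in (0:ℝ)..Real.pi, (ε + Real.sin θ / 2)⁻¹ := by
      apply intervalIntegral.integral_nonneg hpi.le
      intro θ hθ
      have h1 : 0 ≤ Real.sin θ := Real.sin_nonneg_of_nonneg_of_le_pi hθ.1 hθ.2
      positivity
    calc Qhyp d r ≤ S * (K * ∫ θ in (0:ℝ)..Real.pi, (ε + Real.sin θ / 2)⁻¹) := by
          rw [hQ]; exact mul_le_mul_of_nonneg_left hI hSpos.le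
      _ ≤ S * (K * (3 * Real.pi * r)) := by
          apply mul_le_mul_of_nonneg_left _ hSpos.le
          exact mul_le_mul_of_nonneg_left hJ hKpos.le
      _ ≤ S * ((A * Real.exp (-p * r)) * (3 * Real.pi * r)) := by
          apply mul_le_mul_of_nonneg_left _ hSpos.le
          apply mul_le_mul_of_nonneg_right hKbound
          positivity
      _ = (S * (A * (3 * Real.pi))) * r * Real.exp (-p * r) := by ring
      _ ≤ (S * (A * (4 * Real.pi))) * r * Real.exp (-p * r) := by
          apply mul_le_mul_of_nonneg_right _ hexp_pos.le
          apply mul_le_mul_of_nonneg_right _ hrpos.le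
          apply mul_le_mul_of_nonneg_left _ hSpos.le
          apply mul_le_mul_of_nonneg_left _ hApos.le
          linarith
      _ = c₂ * r * Real.exp (-p * r) := by rw [hc₂]
      _ ≤ (c₁ + c₂) * max 1 r * Real.exp (-p * r) := by
          rw [hmax]
          apply mul_le_mul_of_nonneg_right _ hexp_pos.le
          apply mul_le_mul_of_nonneg_right _ hrpos.le
          linarith
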